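/- Let (Ω, F, P) be a probability space and let (X_i)_{i∈ℕ} be independent ℕ-valued random variables such that X_i has the Poisson distribution with mean Λ_i, where (Λ_i) are nonnegative reals with Λ_i ≤ λ_max for all i and (1/n)·Σ_{i<n} Λ_i → λ̄ as n → ∞. Then (1/n)·Σ_{i<n} X_i → λ̄ almost surely. -/

import Mathlib

open MeasureTheory ProbabilityTheory

open Filter
open scoped ENNReal NNReal

noncomputable def pois (l : ℝ) (k : ℕ) : ℝ := Real.exp (-l) * l ^ k / (Nat.factorial k)

lemma pois_nonneg {l : ℝ} (hl : 0 ≤ l) (k : ℕ) : 0 ≤ pois l k := by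
  unfold pois; positivity

lemma hasSum_pois (l : ℝ) : HasSum (pois l) 1 := by
  have h := NormedSpace.expSeries_div_hasSum_exp l
  rw [← Real.exp_eq_exp_ℝ] at h
  have h2 := h.mul_left (Real.exp (-l))
  rw [← Real.exp_add, neg_add_cancel, Real.exp_zero] at h2
  convert h2 using 2 with k
  · rfl
  unfold pois
  ring

lemma hasSum_pois_mean (l : ℝ) : HasSum (fun k : ℕ => (k : ℝ) * pois l k) l := by
  have key : ∀ k : ℕ, ((k + 1 : ℕ) : ℝ) * pois l (k + 1) = l * pois l k := by
    intro k
    unfold pois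
    have : (Nat.factorial (k+1) : ℝ) = (k+1) * Nat.factorial k := by
      push_cast [Nat.factorial_succ]; ring
    rw [this]
    have h1 : (Nat.factorial k : ℝ) ≠ 0 := Nat.cast_ne_zero.mpr (Nat.factorial_ne_zero k)
    have h2 : ((k : ℝ) + 1) ≠ 0 := by positivity
    field_simp
    push_cast
    ring
  have h : HasSum (fun k : ℕ => ((k + 1 : ℕ) : ℝ) * pois l (k + 1)) l := by
    simp_rw [key]
    simpa using (hasSum_pois l).mul_left l
  have := (hasSum_nat_add_iff (f := fun k : ℕ => (k : ℝ) * pois l k) 1).mp h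
  simpa using this

lemma hasSum_pois_sqmean (l : ℝ) : HasSum (fun k : ℕ => ((k : ℝ))^2 * pois l k) (l + l^2) := by
  have key : ∀ k : ℕ, (((k + 2 : ℕ) : ℝ)) * (((k + 2 : ℕ) : ℝ) - 1) * pois l (k + 2)
      = l^2 * pois l k := by
    intro k
    unfold pois
    have : (Nat.factorial (k+2) : ℝ) = (k+2) * ((k+1) * Nat.factorial k) := by
      push_cast [Nat.factorial_succ]; ring
    rw [this]
    have h1 : (Nat.factorial k : ℝ) ≠ 0 := Nat.cast_ne_zero.mpr (Nat.factorial_ne_zero k)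
    have h2 : ((k : ℝ) + 2) ≠ 0 := by positivity
    have h3 : ((k : ℝ) + 1) ≠ 0 := by positivity
    field_simp
    push_cast
    ring
  have h : HasSum (fun k : ℕ => ((k + 2 : ℕ) : ℝ) * (((k + 2 : ℕ) : ℝ) - 1) * pois l (k + 2))
      (l^2) := by
    simp_rw [key]
    simpa using (hasSum_pois l).mul_left (l^2)
  have h2 := (hasSum_nat_add_iff (f := fun k : ℕ => (k : ℝ) * ((k : ℝ) - 1) * pois l k) 2).mp h
  have h3 : HasSum (fun k : ℕ => (k : ℝ) * ((k : ℝ) - 1) * pois l k) (l^2) := by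
    simpa [Finset.sum_range_succ] using h2
  have h4 := h3.add (hasSum_pois_mean l)
  rw [add_comm] at h4
  convert h4 using 2 with k
  ring

section Moments
variable {Ω : Type*} [MeasureSpace Ω] [IsProbabilityMeasure (ℙ : Measure Ω)]
  {X : Ω → ℕ} {l : ℝ}

lemma pois_lintegral (hX : Measurable X)
    (hp : ∀ k, ℙ {ω | X ω = k} = ENNReal.ofReal (pois l k))
    (hl : 0 ≤ l) {g : ℕ → ℝ} (hg : ∀ k, 0 ≤ g k) {M : ℝ}
    (hsum : HasSum (fun k => g k * pois l k) M) :
    ∫⁻ ω, ENNReal.ofReal (g (X ω)) ∂ℙ = ENNReal.ofReal M := by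
  have h1 : ∫⁻ ω, ENNReal.ofReal (g (X ω)) ∂ℙ
      = ∫⁻ k, ENNReal.ofReal (g k) ∂(Measure.map X ℙ) := by
    rw [lintegral_map (by measurability) hX]
  rw [h1, lintegral_countable' (fun k => ENNReal.ofReal (g k))]
  have h2 : ∀ k : ℕ, Measure.map X ℙ {k} = ENNReal.ofReal (pois l k) := by
    intro k
    rw [Measure.map_apply hX (measurableSet_singleton k)]
    have : X ⁻¹' {k} = {ω | X ω = k} := rfl
    rw [this, hp k]
  calc ∑' k : ℕ, ENNReal.ofReal (g k) * Measure.map X ℙ {k}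
      = ∑' k : ℕ, ENNReal.ofReal (g k * pois l k) := by
        congr 1; ext k
        rw [h2 k, ← ENNReal.ofReal_mul (hg k)]
    _ = ENNReal.ofReal M := by
        rw [← ENNReal.ofReal_tsum_of_nonneg (fun k => mul_nonneg (hg k) (pois_nonneg hl k))
          hsum.summable, hsum.tsum_eq]

lemma pois_integrable (hX : Measurable X)
    (hp : ∀ k, ℙ {ω | X ω = k} = ENNReal.ofReal (pois l k)) (hl : 0 ≤ l) :
    Integrable (fun ω => (X ω : ℝ)) ℙ := by
  have hm : AEStronglyMeasurable (fun ω => (X ω : ℝ)) ℙ :=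
    ((measurable_from_nat.comp hX)).aestronglyMeasurable
  refine ⟨hm, ?_⟩
  rw [hasFiniteIntegral_iff_ofReal (Filter.Eventually.of_forall (fun ω => by positivity))]
  rw [pois_lintegral hX hp hl (g := fun k => (k : ℝ)) (fun k => by positivity)
    (hasSum_pois_mean l)]
  exact ENNReal.ofReal_lt_top

lemma pois_sq_integrable (hX : Measurable X)
    (hp : ∀ k, ℙ {ω | X ω = k} = ENNReal.ofReal (pois l k)) (hl : 0 ≤ l) :
    Integrable (fun ω => (X ω : ℝ) ^ 2) ℙ := by
  have hm : AEStronglyMeasurable (fun ω => (X ω : ℝ) ^ 2) ℙ :=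
    (((measurable_from_nat.comp hX)).pow_const 2).aestronglyMeasurable
  refine ⟨hm, ?_⟩
  rw [hasFiniteIntegral_iff_ofReal (Filter.Eventually.of_forall (fun ω => by positivity))]
  rw [pois_lintegral hX hp hl (g := fun k => (k : ℝ) ^ 2) (fun k => by positivity)
    (hasSum_pois_sqmean l)]
  exact ENNReal.ofReal_lt_top

lemma pois_memℒp_two (hX : Measurable X)
    (hp : ∀ k, ℙ {ω | X ω = k} = ENNReal.ofReal (pois l k)) (hl : 0 ≤ l) :
    MemLp (fun ω => (X ω : ℝ)) 2 ℙ :=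
  (memLp_two_iff_integrable_sq
    ((measurable_from_nat.comp hX)).aestronglyMeasurable).mpr
    (pois_sq_integrable hX hp hl)

lemma pois_integral (hX : Measurable X)
    (hp : ∀ k, ℙ {ω | X ω = k} = ENNReal.ofReal (pois l k)) (hl : 0 ≤ l) :
    ∫ ω, (X ω : ℝ) ∂ℙ = l := by
  have hm : Measurable fun ω => ((X ω : ℝ)) := measurable_from_nat.comp hX
  rw [integral_eq_lintegral_of_nonneg_ae (Filter.Eventually.of_forall (fun ω => by positivity))
    hm.aestronglyMeasurable]
  rw [pois_lintegral hX hp hl (g := fun k => (k : ℝ)) (fun k => by positivity)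
    (hasSum_pois_mean l)]
  exact ENNReal.toReal_ofReal hl

lemma pois_sq_integral (hX : Measurable X)
    (hp : ∀ k, ℙ {ω | X ω = k} = ENNReal.ofReal (pois l k)) (hl : 0 ≤ l) :
    ∫ ω, (X ω : ℝ) ^ 2 ∂ℙ = l + l ^ 2 := by
  have hm : Measurable fun ω => ((X ω : ℝ) ^ 2) := (measurable_from_nat.comp hX).pow_const 2
  rw [integral_eq_lintegral_of_nonneg_ae (Filter.Eventually.of_forall (fun ω => by positivity))
    hm.aestronglyMeasurable]
  rw [pois_lintegral hX hp hl (g := fun k => (k : ℝ) ^ 2) (fun k => by positivity)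
    (hasSum_pois_sqmean l)]
  exact ENNReal.toReal_ofReal (by positivity)

lemma pois_variance (hX : Measurable X)
    (hp : ∀ k, ℙ {ω | X ω = k} = ENNReal.ofReal (pois l k)) (hl : 0 ≤ l) :
    variance (fun ω => (X ω : ℝ)) ℙ = l := by
  rw [variance_eq_sub (pois_memℒp_two hX hp hl)]
  have h1 : ∫ ω, ((fun ω => (X ω : ℝ)) ^ 2) ω ∂ℙ = l + l ^ 2 := by
    simpa [Pi.pow_apply] using pois_sq_integral hX hp hl
  rw [h1, pois_integral hX hp hl]
  ring

end Moments

lemma le_two_mul_floor {x : ℝ} (hx : 1 ≤ x) : x ≤ 2 * (⌊x⌋₊ : ℝ) := by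
  have h1 : (1 : ℝ) ≤ (⌊x⌋₊ : ℝ) := by
    exact_mod_cast Nat.one_le_floor_iff x |>.mpr hx
  have h2 : x < (⌊x⌋₊ : ℝ) + 1 := Nat.lt_floor_add_one x
  linarith

/-- Strong law for independent Poisson random variables with bounded means: if `X i` are
jointly independent, `X i ~ Poisson(Λ i)` with `Λ i ≤ λ_max`, and the running averages of
the means converge to `λ̄`, then the running averages of the `X i` converge to `λ̄`
almost surely. -/
theorem poisson_strong_law {Ω : Type*} [MeasureSpace Ω]
    [IsProbabilityMeasure (ℙ : Measure Ω)]
    (X : ℕ → Ω → ℕ) (Λ : ℕ → ℝ) (lamMax lamBar : ℝ)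
    (hmeas : ∀ i, Measurable (X i))
    (hindep : iIndepFun X ℙ)
    (hΛnonneg : ∀ i, 0 ≤ Λ i) (hΛbdd : ∀ i, Λ i ≤ lamMax)
    (hpois : ∀ i k, ℙ {ω | X i ω = k}
      = ENNReal.ofReal (Real.exp (-(Λ i)) * Λ i ^ k / (Nat.factorial k)))
    (hmean : Filter.Tendsto (fun n : ℕ => (∑ i ∈ Finset.range n, Λ i) / n)
      Filter.atTop (nhds lamBar)) :
    ∀ᵐ ω ∂(ℙ : Measure Ω),
      Filter.Tendsto (fun n : ℕ => (∑ i ∈ Finset.range n, (X i ω : ℝ)) / n)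
        Filter.atTop (nhds lamBar) := by
  have hpois' : ∀ i k, ℙ {ω | X i ω = k} = ENNReal.ofReal (pois (Λ i) k) := by
    intro i k; rw [hpois i k]; rfl
  set Y : ℕ → Ω → ℝ := fun i ω => (X i ω : ℝ) with hYdef
  set S : ℕ → Ω → ℝ := fun n ω => ∑ i ∈ Finset.range n, Y i ω with hSdef
  set T : ℕ → ℝ := fun n => ∑ i ∈ Finset.range n, Λ i with hTdef
  have hYmeas : ∀ i, Measurable (Y i) := fun i => measurable_from_nat.comp (hmeas i)
  have hYint : ∀ i, Integrable (Y i) ℙ := fun i =>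
    pois_integrable (hmeas i) (hpois' i) (hΛnonneg i)
  have hYl2 : ∀ i, MemLp (Y i) 2 ℙ := fun i =>
    pois_memℒp_two (hmeas i) (hpois' i) (hΛnonneg i)
  have hYvar : ∀ i, variance (Y i) ℙ = Λ i := fun i =>
    pois_variance (hmeas i) (hpois' i) (hΛnonneg i)
  have hYindep : ∀ i j, i ≠ j → IndepFun (Y i) (Y j) ℙ := fun i j hij =>
    (hindep.indepFun hij).comp measurable_from_nat measurable_from_nat
  have hSmeas : ∀ n, Measurable (S n) := fun n =>
    Finset.measurable_sum _ (fun i _ => hYmeas i)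
  have hSl2 : ∀ n, MemLp (S n) 2 ℙ := by
    intro n
    have := memLp_finset_sum' (μ := ℙ) (Finset.range n) (f := Y) (fun i _ => hYl2 i)
    convert this using 1
    ext ω; simp [hSdef, Finset.sum_apply]
  have hSmean : ∀ n, ∫ ω, S n ω ∂ℙ = T n := by
    intro n
    rw [hSdef]
    rw [integral_finset_sum _ (fun i _ => hYint i)]
    exact Finset.sum_congr rfl fun i _ =>
      pois_integral (hmeas i) (hpois' i) (hΛnonneg i)
  have hSvar : ∀ n, variance (S n) ℙ = T n := by
    intro n
    have hv := IndepFun.variance_sum (μ := ℙ) (X := Y) (s := Finset.range n)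
      (fun i _ => hYl2 i) (fun i _ j _ hij => hYindep i j hij)
    have he : S n = ∑ i ∈ Finset.range n, Y i := by
      ext ω; simp [hSdef, Finset.sum_apply]
    rw [he, hv]
    exact Finset.sum_congr rfl fun i _ => hYvar i
  have hTnonneg : ∀ n, 0 ≤ T n := fun n => Finset.sum_nonneg fun i _ => hΛnonneg i
  set C : ℝ := max lamMax 0 with hCdef
  have hCnonneg : 0 ≤ C := le_max_right _ _
  have hTle : ∀ n, T n ≤ n * C := by
    intro n
    calc T n ≤ ∑ i ∈ Finset.range n, C :=
        Finset.sum_le_sum fun i _ => le_trans (hΛbdd i) (le_max_left _ _)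
      _ = n * C := by simp [mul_comm]
  have hevarS : ∀ n, ∫⁻ ω, ENNReal.ofReal ((S n ω - T n) ^ 2) ∂ℙ = ENNReal.ofReal (T n) := by
    intro n
    have h1 : evariance (S n) ℙ = ∫⁻ ω, ENNReal.ofReal ((S n ω - T n) ^ 2) ∂ℙ := by
      rw [evariance_eq_lintegral_ofReal, hSmean n]
    rw [← h1]
    have h2 : evariance (S n) ℙ ≠ ⊤ := (hSl2 n).evariance_lt_top.ne
    rw [← hSvar n, variance]
    exact (ENNReal.ofReal_toReal h2).symm
  -- Main step: along geometric subsequences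
  have key : ∀ c : ℝ, 1 < c → ∀ᵐ ω ∂(ℙ : Measure Ω),
      Filter.Tendsto (fun n : ℕ => S (⌊c ^ n⌋₊) ω / (⌊c ^ n⌋₊ : ℝ))
        Filter.atTop (nhds lamBar) := by
    intro c hc
    set u : ℕ → ℕ := fun n => ⌊c ^ n⌋₊ with hudef
    have hcn1 : ∀ n : ℕ, (1 : ℝ) ≤ c ^ n := fun n => one_le_pow₀ hc.le
    have hu1 : ∀ n, 1 ≤ u n := fun n => Nat.one_le_floor_iff _ |>.mpr (hcn1 n)
    have hupos : ∀ n, (0 : ℝ) < (u n : ℝ) := fun n => by exact_mod_cast hu1 n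
    set F : ℕ → Ω → ℝ≥0∞ :=
      fun n ω => ENNReal.ofReal ((S (u n) ω - T (u n)) ^ 2) * (ENNReal.ofReal ((u n : ℝ) ^ 2))⁻¹
      with hFdef
    have hFmeas : ∀ n, Measurable (F n) := fun n =>
      (ENNReal.measurable_ofReal.comp (((hSmeas (u n)).sub_const _).pow_const 2)).mul_const _
    have hFint : ∀ n, ∫⁻ ω, F n ω ∂ℙ ≤ ENNReal.ofReal (2 * C * (c⁻¹) ^ n) := by
      intro n
      have hmg : Measurable fun ω => ENNReal.ofReal ((S (u n) ω - T (u n)) ^ 2) :=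
        ENNReal.measurable_ofReal.comp (((hSmeas (u n)).sub_const _).pow_const 2)
      rw [hFdef]
      simp only
      rw [lintegral_mul_const _ hmg, hevarS (u n), ← div_eq_mul_inv,
        ← ENNReal.ofReal_div_of_pos (pow_pos (hupos n) 2)]
      apply ENNReal.ofReal_le_ofReal
      have h1 : T (u n) / (u n : ℝ) ^ 2 ≤ C / (u n : ℝ) := by
        rw [div_le_div_iff₀ (pow_pos (hupos n) 2) (hupos n), sq]
        calc T (u n) * (u n : ℝ) ≤ ((u n : ℝ) * C) * (u n : ℝ) := by
              apply mul_le_mul_of_nonneg_right (hTle (u n)) (hupos n).le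
          _ = C * ((u n : ℝ) * (u n : ℝ)) := by ring
      refine h1.trans ?_
      have h2 : c ^ n ≤ 2 * (u n : ℝ) := le_two_mul_floor (hcn1 n)
      rw [div_le_iff₀ (hupos n)]
      have h3 : (2 * C * c⁻¹ ^ n) * (u n : ℝ) = C * (c⁻¹ ^ n * (2 * (u n : ℝ))) := by ring
      rw [h3]
      calc C = C * (c⁻¹ ^ n * c ^ n) := by
            rw [← mul_pow, inv_mul_cancel₀ (by positivity), one_pow, mul_one]
        _ ≤ C * (c⁻¹ ^ n * (2 * (u n : ℝ))) := by
            apply mul_le_mul_of_nonneg_left (mul_le_mul_of_nonneg_left h2 (by positivity)) hCnonneg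
    have hsummable : Summable (fun n : ℕ => 2 * C * (c⁻¹) ^ n) :=
      (summable_geometric_of_lt_one (by positivity)
        (by rw [inv_lt_one_iff₀]; right; exact hc)).mul_left _
    have htsum : ∑' n, ∫⁻ ω, F n ω ∂ℙ ≠ ⊤ := by
      apply ne_top_of_le_ne_top (b := ENNReal.ofReal (∑' n, 2 * C * (c⁻¹) ^ n))
      · exact ENNReal.ofReal_ne_top
      · rw [ENNReal.ofReal_tsum_of_nonneg (fun n => by positivity) hsummable]
        exact ENNReal.tsum_le_tsum hFint
    have hlint : ∫⁻ ω, ∑' n, F n ω ∂ℙ ≠ ⊤ := by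
      rw [lintegral_tsum (fun n => (hFmeas n).aemeasurable)]
      exact htsum
    have hae : ∀ᵐ ω ∂(ℙ : Measure Ω), ∑' n, F n ω < ⊤ :=
      ae_lt_top (Measurable.ennreal_tsum hFmeas) hlint
    filter_upwards [hae] with ω hω
    have h0 : Filter.Tendsto (fun n => F n ω) Filter.atTop (nhds 0) :=
      ENNReal.tendsto_atTop_zero_of_tsum_ne_top hω.ne
    have h1 : Filter.Tendsto (fun n => ((S (u n) ω - T (u n)) / (u n : ℝ)) ^ 2)
        Filter.atTop (nhds 0) := by
      have h2 := (ENNReal.tendsto_toReal (by simp)).comp h0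
      convert h2 using 2 with n
      simp only [Function.comp_apply, hFdef]
      rw [ENNReal.toReal_mul, ENNReal.toReal_inv, ENNReal.toReal_ofReal (sq_nonneg _),
        ENNReal.toReal_ofReal (sq_nonneg _), div_pow, div_eq_mul_inv]
      simp
    have h3 : Filter.Tendsto (fun n => (S (u n) ω - T (u n)) / (u n : ℝ))
        Filter.atTop (nhds 0) := by
      have h4 : Filter.Tendsto (fun n => |(S (u n) ω - T (u n)) / (u n : ℝ)|)
          Filter.atTop (nhds 0) := by
        have := h1.sqrt
        rw [Real.sqrt_zero] at this
        convert this using 2 with n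
        rw [Real.sqrt_sq_eq_abs]
      have hlow : Filter.Tendsto (fun n => -|(S (u n) ω - T (u n)) / (u n : ℝ)|)
          Filter.atTop (nhds 0) := by simpa using h4.neg
      exact tendsto_of_tendsto_of_tendsto_of_le_of_le hlow h4
        (fun n => neg_abs_le _) (fun n => le_abs_self _)
    have hTu : Filter.Tendsto (fun n => T (u n) / (u n : ℝ)) Filter.atTop (nhds lamBar) := by
      have huat : Filter.Tendsto u Filter.atTop Filter.atTop :=
        (tendsto_nat_floor_atTop (α := ℝ)).comp (tendsto_pow_atTop_atTop_of_one_lt hc)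
      exact hmean.comp huat
    have := h3.add hTu
    rw [zero_add] at this
    convert this using 2 with n
    rw [← add_div, sub_add_cancel]
  -- Combine along c_k → 1
  set cs : ℕ → ℝ := fun k => 1 + ((k : ℝ) + 1)⁻¹ with hcs
  have hcs1 : ∀ k, 1 < cs k := fun k => by
    rw [hcs]; simp only [lt_add_iff_pos_right]; positivity
  have hcslim : Filter.Tendsto cs Filter.atTop (nhds 1) := by
    have : Filter.Tendsto (fun k : ℕ => ((k : ℝ) + 1)⁻¹) Filter.atTop (nhds 0) :=
      tendsto_one_div_add_atTop_nhds_zero_nat.congr (fun k => by rw [one_div])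
    simpa using (tendsto_const_nhds (x := (1 : ℝ))).add this
  have hall : ∀ᵐ ω ∂(ℙ : Measure Ω), ∀ k : ℕ,
      Filter.Tendsto (fun n : ℕ => S (⌊cs k ^ n⌋₊) ω / (⌊cs k ^ n⌋₊ : ℝ))
        Filter.atTop (nhds lamBar) :=
    ae_all_iff.mpr fun k => key (cs k) (hcs1 k)
  filter_upwards [hall] with ω hω
  have hmono : Monotone (fun n => S n ω) := by
    intro a b hab
    apply Finset.sum_le_sum_of_subset_of_nonneg (Finset.range_subset_range.mpr hab)
    intro i _ _
    positivity
  exact tendsto_div_of_monotone_of_tendsto_div_floor_pow (fun n => S n ω) lamBar hmono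
    cs hcs1 hcslim hω
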